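/- arXiv:2106.01005 — 4 statements merged into one kernel-verified Lean document; each statement's English description precedes it below -/
import Mathlib

section
/- For every θ ∈ (0,∞)^d and every s ∈ ℂ with Re(s) > d, Σ_{v ∈ Z^d_+ \ {0}} 2^{d(v)-1} (θ·v)^{-s} = ζ(s) · Σ_{v ∈ P_{d+}} 2^{d(v)-1} (θ·v)^{-s}, both series converging absolutely. -/
open Complex Finset

noncomputable section

/-- Number of nonzero coordinates of a vector `v ∈ ℤ^d_+`. -/
def nnz {d : ℕ} (v : Fin d → ℕ) : ℕ := (Finset.univ.filter fun i => v i ≠ 0).card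

/-- Standard scalar product `θ · v`. -/
def dotR {d : ℕ} (θ : Fin d → ℝ) (v : Fin d → ℕ) : ℝ := ∑ i, θ i * (v i : ℝ)

/-- The set `P_{d+}` of primitive vectors of `ℤ^d_+ \ {0}`. -/
abbrev Prim (d : ℕ) := {v : Fin d → ℕ // v ≠ 0 ∧ Finset.univ.gcd v = 1}

namespace Stmt2Aux

variable {d : ℕ}

lemma nnz_mul (k : ℕ) (hk : k ≠ 0) (v : Fin d → ℕ) :
    nnz (fun i => k * v i) = nnz v := by
  unfold nnz
  congr 1
  apply Finset.filter_congr
  intro i _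
  simp [hk]

lemma dotR_mul (θ : Fin d → ℝ) (k : ℕ) (v : Fin d → ℕ) :
    dotR θ (fun i => k * v i) = (k : ℝ) * dotR θ v := by
  unfold dotR
  rw [Finset.mul_sum]
  apply Finset.sum_congr rfl
  intros
  push_cast
  ring

lemma dotR_pos (θ : Fin d → ℝ) (hθ : ∀ i, 0 < θ i) {v : Fin d → ℕ} (hv : v ≠ 0) :
    0 < dotR θ v := by
  obtain ⟨j, hj⟩ : ∃ j, v j ≠ 0 := by
    by_contra h
    push_neg at h
    exact hv (funext h)
  apply Finset.sum_pos' (fun i _ => mul_nonneg (hθ i).le (Nat.cast_nonneg _))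
  refine ⟨j, Finset.mem_univ j, ?_⟩
  have : (1 : ℝ) ≤ (v j : ℝ) := by exact_mod_cast Nat.one_le_iff_ne_zero.mpr hj
  nlinarith [hθ j]

lemma summable_shift {p : ℝ} (hp : 1 < p) :
    Summable (fun n : ℕ => ((n : ℝ) + 1) ^ (-p)) := by
  have h := Real.summable_one_div_nat_rpow.mpr hp
  have h2 := (summable_nat_add_iff 1).mpr h
  apply h2.congr
  intro n
  rw [one_div, ← Real.rpow_neg (by positivity)]
  push_cast
  ring_nf

lemma summable_prod_pow (d : ℕ) {p : ℝ} (hp : 1 < p) :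
    Summable (fun v : Fin d → ℕ => ∏ i, ((v i : ℝ) + 1) ^ (-p)) := by
  induction d with
  | zero =>
      haveI : Finite (Fin 0 → ℕ) := Finite.of_subsingleton
      exact Summable.of_finite
  | succ n ih =>
      have hprod := (summable_shift hp).mul_of_nonneg ih
        (fun n => by positivity) (fun v => by positivity)
      rw [← (Fin.consEquiv (fun _ : Fin (n + 1) => ℕ)).summable_iff]
      apply hprod.congr
      rintro ⟨k, w⟩
      simp [Fin.consEquiv, Fin.prod_univ_succ]

lemma norm_term (θ : Fin d → ℝ) (hθ : ∀ i, 0 < θ i) {v : Fin d → ℕ} (hv : v ≠ 0) (s : ℂ) :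
    ‖(2 : ℂ) ^ (nnz v - 1) * ((dotR θ v : ℝ) : ℂ) ^ (-s)‖
      = 2 ^ (nnz v - 1) * (dotR θ v) ^ (-s.re) := by
  have habs := Complex.norm_cpow_eq_rpow_re_of_pos (dotR_pos θ hθ hv) (-s)
  simp only [norm_mul, norm_pow, habs, Complex.neg_re]
  norm_num

lemma nnz_le (v : Fin d → ℕ) : nnz v ≤ d := by
  have := Finset.card_filter_le Finset.univ (fun i => v i ≠ 0)
  simpa [nnz] using this

lemma keyBound (hd : 1 ≤ d) (θ : Fin d → ℝ) (hθ : ∀ i, 0 < θ i) {σ : ℝ}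
    (hσ : (d : ℝ) < σ) :
    ∃ K : ℝ, 0 ≤ K ∧ ∀ v : Fin d → ℕ, v ≠ 0 →
      2 ^ (nnz v - 1) * (dotR θ v) ^ (-σ) ≤ K * ∏ i, ((v i : ℝ) + 1) ^ (-(σ / d)) := by
  haveI : NeZero d := ⟨by omega⟩
  obtain ⟨j₀, -, hm⟩ := Finset.exists_min_image Finset.univ θ ⟨default, Finset.mem_univ _⟩
  set m := θ j₀ with hm_def
  have hm0 : 0 < m := hθ j₀
  have hσ0 : 0 < σ := lt_of_le_of_lt (by exact_mod_cast Nat.zero_le d) hσ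
  refine ⟨2 ^ d * (2 / m) ^ σ, by positivity, ?_⟩
  intro v hv
  set N : ℕ := ∑ i, v i with hN_def
  have hN1 : 1 ≤ N := by
    rcases Nat.eq_zero_or_pos N with h | h
    · exfalso
      rw [hN_def] at h
      exact hv (funext fun i => Finset.sum_eq_zero_iff.mp h i (Finset.mem_univ i))
    · exact h
  have hNR : (1 : ℝ) ≤ (N : ℝ) := by exact_mod_cast hN1
  have h1 : m * N ≤ dotR θ v := by
    have : (N : ℝ) = ∑ i, (v i : ℝ) := by rw [hN_def]; push_cast; rfl
    rw [this, Finset.mul_sum]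
    apply Finset.sum_le_sum
    intro i _
    have := hm i (Finset.mem_univ i)
    have hvi : (0 : ℝ) ≤ (v i : ℝ) := by positivity
    nlinarith
  have h2 : ∏ i, ((v i : ℝ) + 1) ≤ (2 * N) ^ d := by
    have : ((2 : ℝ) * N) ^ d = ∏ _i : Fin d, (2 * (N : ℝ)) := by
      rw [Finset.prod_const, Finset.card_univ, Fintype.card_fin]
    rw [this]
    apply Finset.prod_le_prod (fun i _ => by positivity)
    intro i _
    have hvN : v i ≤ N := Finset.single_le_sum (f := fun i => v i)
      (fun i _ => Nat.zero_le _) (Finset.mem_univ i)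
    have : (v i : ℝ) ≤ (N : ℝ) := by exact_mod_cast hvN
    linarith
  -- ∏ ((v i)+1)^(-(σ/d)) ≥ (2N)^(-σ)
  have hprodpos : (0 : ℝ) < ∏ i, ((v i : ℝ) + 1) := by positivity
  have h3 : (((2 : ℝ) * N) ^ d) ^ (-(σ / d)) ≤ (∏ i, ((v i : ℝ) + 1)) ^ (-(σ / d)) :=
    Real.rpow_le_rpow_of_nonpos hprodpos h2 (neg_nonpos.mpr (by positivity))
  have hdne : (d : ℝ) ≠ 0 := Nat.cast_ne_zero.mpr (by omega)
  have h4 : (((2 : ℝ) * N) ^ d) ^ (-(σ / d)) = (2 * (N : ℝ)) ^ (-σ) := by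
    rw [← Real.rpow_natCast (2 * (N : ℝ)) d, ← Real.rpow_mul (by positivity)]
    congr 1
    field_simp
  have h5 : (∏ i, ((v i : ℝ) + 1) ^ (-(σ / d))) = (∏ i, ((v i : ℝ) + 1)) ^ (-(σ / d)) :=
    Real.finset_prod_rpow _ _ (fun i _ => by positivity) _
  have hA : (2 * (N : ℝ)) ^ (-σ) ≤ ∏ i, ((v i : ℝ) + 1) ^ (-(σ / d)) := by
    rw [h5, ← h4]; exact h3
  have h6 : (dotR θ v) ^ (-σ) ≤ (m * N) ^ (-σ) :=
    Real.rpow_le_rpow_of_nonpos (by positivity) h1 (neg_nonpos.mpr hσ0.le)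
  have h7 : (m * (N : ℝ)) ^ (-σ) = (2 / m) ^ σ * (2 * N) ^ (-σ) := by
    have e1 : (2 / m) ^ σ = (m / 2) ^ (-σ) := by
      rw [Real.rpow_neg (by positivity), ← Real.inv_rpow (by positivity), inv_div]
    rw [e1, ← Real.mul_rpow (by positivity) (by positivity)]
    congr 1
    field_simp
  have hbound : (dotR θ v) ^ (-σ) ≤ (2 / m) ^ σ * ∏ i, ((v i : ℝ) + 1) ^ (-(σ / d)) := by
    calc (dotR θ v) ^ (-σ) ≤ (m * N) ^ (-σ) := h6
      _ = (2 / m) ^ σ * (2 * N) ^ (-σ) := h7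
      _ ≤ (2 / m) ^ σ * ∏ i, ((v i : ℝ) + 1) ^ (-(σ / d)) := by
          apply mul_le_mul_of_nonneg_left hA (by positivity)
  have hpow : (2 : ℝ) ^ (nnz v - 1) ≤ 2 ^ d := by
    apply pow_le_pow_right₀ (by norm_num)
    have := nnz_le v
    omega
  calc 2 ^ (nnz v - 1) * (dotR θ v) ^ (-σ)
      ≤ 2 ^ d * ((2 / m) ^ σ * ∏ i, ((v i : ℝ) + 1) ^ (-(σ / d))) := by
        apply mul_le_mul hpow hbound (Real.rpow_nonneg (dotR_pos θ hθ hv).le _)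
          (by positivity)
    _ = 2 ^ d * (2 / m) ^ σ * ∏ i, ((v i : ℝ) + 1) ^ (-(σ / d)) := by ring

lemma summable_norm_aux (hd : 1 ≤ d) (θ : Fin d → ℝ) (hθ : ∀ i, 0 < θ i)
    (s : ℂ) (hs : (d : ℝ) < s.re) {P : (Fin d → ℕ) → Prop} (hP : ∀ v, P v → v ≠ 0) :
    Summable (fun v : {v // P v} =>
      ‖(2 : ℂ) ^ (nnz v.1 - 1) * ((dotR θ v.1 : ℝ) : ℂ) ^ (-s)‖) := by
  obtain ⟨K, hK0, hK⟩ := keyBound hd θ hθ hs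
  have hp1 : 1 < s.re / d := by
    rw [lt_div_iff₀ (by exact_mod_cast Nat.lt_of_lt_of_le Nat.zero_lt_one hd)]
    calc (1 : ℝ) * d = d := one_mul _
      _ < s.re := hs
  have hsum := ((summable_prod_pow d hp1).mul_left K).subtype {v | P v}
  apply Summable.of_nonneg_of_le (fun v => norm_nonneg _) ?_ hsum
  rintro ⟨v, hv⟩
  rw [norm_term θ hθ (hP v hv) s]
  have := hK v (hP v hv)
  simpa using this

/-- The bijection `ℕ+ × P_{d+} ≃ ℤ^d_+ \ {0}`, `(k, v) ↦ k · v`. -/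
def primEquiv (d : ℕ) : ℕ+ × Prim d ≃ {v : Fin d → ℕ // v ≠ 0} where
  toFun p := ⟨fun i => (p.1 : ℕ) * p.2.1 i, by
    intro h
    apply p.2.2.1
    funext i
    have := congrFun h i
    simpa [p.1.ne_zero] using this⟩
  invFun v :=
    (⟨Finset.univ.gcd v.1, Nat.pos_of_ne_zero (by
        rw [Ne, Finset.gcd_eq_zero_iff]
        intro h
        exact v.2 (funext fun i => h i (Finset.mem_univ i)))⟩,
     ⟨fun i => v.1 i / Finset.univ.gcd v.1, by
        constructor
        · obtain ⟨j, hj⟩ : ∃ j, v.1 j ≠ 0 := by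
            by_contra h
            push_neg at h
            exact v.2 (funext h)
          intro h
          have hdvd : Finset.univ.gcd v.1 ∣ v.1 j := Finset.gcd_dvd (Finset.mem_univ j)
          have hgne : Finset.univ.gcd v.1 ≠ 0 := by
            rw [Ne, Finset.gcd_eq_zero_iff]
            intro h'
            exact v.2 (funext fun i => h' i (Finset.mem_univ i))
          have := congrFun h j
          simp only [Pi.zero_apply] at this
          rw [Nat.div_eq_zero_iff] at this
          have hle : Finset.univ.gcd v.1 ≤ v.1 j :=
            Nat.le_of_dvd (Nat.pos_of_ne_zero hj) hdvd
          omega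
        · obtain ⟨j, hj⟩ : ∃ j, v.1 j ≠ 0 := by
            by_contra h
            push_neg at h
            exact v.2 (funext h)
          exact Finset.gcd_div_eq_one (f := v.1) (Finset.mem_univ j) hj⟩)
  left_inv := by
    rintro ⟨k, w, hw0, hw1⟩
    have hg : Finset.univ.gcd (fun i => (k : ℕ) * w i) = (k : ℕ) := by
      rw [Finset.gcd_mul_left, hw1]
      simp
    refine Prod.ext (Subtype.ext ?_) (Subtype.ext (funext fun i => ?_))
    · exact hg
    · show ((k : ℕ) * w i) / Finset.univ.gcd (fun i => (k : ℕ) * w i) = w i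
      rw [hg]
      exact Nat.mul_div_cancel_left _ k.pos
  right_inv := by
    rintro ⟨v, hv⟩
    apply Subtype.ext
    funext i
    exact Nat.mul_div_cancel' (Finset.gcd_dvd (Finset.mem_univ i))

end Stmt2Aux

open Stmt2Aux in
/-- For every `θ ∈ (0,∞)^d` and `Re s > d`,
`Σ_{v ∈ ℤ^d_+ \ {0}} 2^{d(v)-1}(θ·v)^{-s} = ζ(s) Σ_{v ∈ P_{d+}} 2^{d(v)-1}(θ·v)^{-s}`,
both series converging absolutely. -/
theorem stmt2 (d : ℕ) (hd : 1 ≤ d) (θ : Fin d → ℝ) (hθ : ∀ i, 0 < θ i)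
    (s : ℂ) (hs : (d : ℝ) < s.re) :
    Summable (fun v : {v : Fin d → ℕ // v ≠ 0} =>
      ‖(2 : ℂ) ^ (nnz v.1 - 1) * (dotR θ v.1 : ℂ) ^ (-s)‖) ∧
    Summable (fun v : Prim d =>
      ‖(2 : ℂ) ^ (nnz v.1 - 1) * (dotR θ v.1 : ℂ) ^ (-s)‖) ∧
    (∑' v : {v : Fin d → ℕ // v ≠ 0}, (2 : ℂ) ^ (nnz v.1 - 1) * (dotR θ v.1 : ℂ) ^ (-s)) =
      riemannZeta s *
        ∑' v : Prim d, (2 : ℂ) ^ (nnz v.1 - 1) * (dotR θ v.1 : ℂ) ^ (-s) := by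
  have hd1 : (1 : ℝ) ≤ (d : ℝ) := by exact_mod_cast hd
  have hs1 : 1 < s.re := lt_of_le_of_lt hd1 hs
  have h1 : Summable (fun v : {v : Fin d → ℕ // v ≠ 0} =>
      ‖(2 : ℂ) ^ (nnz v.1 - 1) * (dotR θ v.1 : ℂ) ^ (-s)‖) :=
    summable_norm_aux hd θ hθ s hs (P := fun v => v ≠ 0) (fun _ h => h)
  have h2 : Summable (fun v : Prim d =>
      ‖(2 : ℂ) ^ (nnz v.1 - 1) * (dotR θ v.1 : ℂ) ^ (-s)‖) :=
    summable_norm_aux hd θ hθ s hs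
      (P := fun v => v ≠ 0 ∧ Finset.univ.gcd v = 1) (fun _ h => h.1)
  refine ⟨h1, h2, ?_⟩
  -- zeta series over ℕ+
  have hzs : Summable (fun k : ℕ+ => ‖((k : ℕ) : ℂ) ^ (-s)‖) := by
    rw [← Equiv.pnatEquivNat.symm.summable_iff]
    apply (summable_shift hs1).congr
    intro n
    have h1 : ((Equiv.pnatEquivNat.symm n : ℕ+) : ℕ) = n + 1 := by
      simp [Equiv.pnatEquivNat, Nat.succPNat_coe]
    show ((n : ℝ) + 1) ^ (-s.re) = ‖(((Equiv.pnatEquivNat.symm n : ℕ+) : ℕ) : ℂ) ^ (-s)‖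
    rw [h1]
    rw [show (((n + 1 : ℕ)) : ℂ) = ((((n + 1 : ℕ) : ℝ)) : ℂ) by push_cast; ring]
    rw [Complex.norm_cpow_eq_rpow_re_of_pos (by positivity)]
    push_cast
    simp [Complex.neg_re]
  have hzeta : (∑' k : ℕ+, ((k : ℕ) : ℂ) ^ (-s)) = riemannZeta s := by
    rw [zeta_eq_tsum_one_div_nat_add_one_cpow hs1]
    rw [← Equiv.pnatEquivNat.symm.tsum_eq (fun k : ℕ+ => ((k : ℕ) : ℂ) ^ (-s))]
    apply tsum_congr
    intro n
    have h1 : ((Equiv.pnatEquivNat.symm n : ℕ+) : ℕ) = n + 1 := by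
      simp [Equiv.pnatEquivNat, Nat.succPNat_coe]
    show (((Equiv.pnatEquivNat.symm n : ℕ+) : ℕ) : ℂ) ^ (-s) = 1 / ((n : ℂ) + 1) ^ s
    rw [h1]
    rw [show (((n + 1 : ℕ)) : ℂ) = ((n : ℂ) + 1) by push_cast; ring]
    rw [cpow_neg, one_div]
  -- main computation
  calc (∑' v : {v : Fin d → ℕ // v ≠ 0}, (2 : ℂ) ^ (nnz v.1 - 1) * (dotR θ v.1 : ℂ) ^ (-s))
      = ∑' p : ℕ+ × Prim d, (2 : ℂ) ^ (nnz ((primEquiv d) p).1 - 1) *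
          ((dotR θ ((primEquiv d) p).1 : ℝ) : ℂ) ^ (-s) :=
        ((primEquiv d).tsum_eq
          (fun v : {v : Fin d → ℕ // v ≠ 0} =>
            (2 : ℂ) ^ (nnz v.1 - 1) * (dotR θ v.1 : ℂ) ^ (-s))).symm
    _ = ∑' p : ℕ+ × Prim d, (((p.1 : ℕ) : ℂ) ^ (-s)) *
          ((2 : ℂ) ^ (nnz p.2.1 - 1) * (dotR θ p.2.1 : ℂ) ^ (-s)) := by
        apply tsum_congr
        rintro ⟨k, w⟩
        have he : ((primEquiv d) (k, w)).1 = fun i => (k : ℕ) * w.1 i := rfl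
        rw [he, nnz_mul (k : ℕ) k.ne_zero w.1, dotR_mul θ (k : ℕ) w.1]
        rw [Complex.ofReal_mul,
          Complex.mul_cpow_ofReal_nonneg (by positivity) (dotR_pos θ hθ w.2.1).le (-s)]
        push_cast
        ring
    _ = (∑' k : ℕ+, ((k : ℕ) : ℂ) ^ (-s)) *
          ∑' w : Prim d, (2 : ℂ) ^ (nnz w.1 - 1) * (dotR θ w.1 : ℂ) ^ (-s) :=
        (tsum_mul_tsum_of_summable_norm hzs h2).symm
    _ = riemannZeta s *
          ∑' v : Prim d, (2 : ℂ) ^ (nnz v.1 - 1) * (dotR θ v.1 : ℂ) ^ (-s) := by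
        rw [hzeta]
end
end

section
/- For every θ ∈ (0,∞)^d and every s ∈ ℂ with Re(s) > d, Σ_{v ∈ Z^d_+ \ {0}} 2^{d(v)-1} (θ·v)^{-s} = Σ_{j=1}^{d} Σ_{1 ≤ i_1 < ⋯ < i_j ≤ d} 2^{j-1} ζ_j(s, θ_{i_1}+⋯+θ_{i_j}, (θ_{i_1},...,θ_{i_j})). In particular, Σ_{v ∈ Z^d_+ ∩ (0,∞)^d} 2^{d(v)-1}(θ·v)^{-s} = 2^{d-1} ζ_d(s, θ_1+⋯+θ_d, θ). -/
open Complex Finset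

noncomputable section

lemma summable_prod_rpow (δ : ℕ) {r : ℝ} (hr : 1 < r) :
    Summable (fun v : Fin δ → ℕ => ∏ i, ((v i : ℝ) + 1) ^ (-r)) := by
  induction δ with
  | zero => exact Summable.of_finite
  | succ n ih =>
    have h0 : Summable (fun n : ℕ => ((n : ℝ)) ^ (-r)) :=
      Real.summable_nat_rpow.mpr (by linarith)
    have h1 : Summable (fun m : ℕ => ((m : ℝ) + 1) ^ (-r)) := by
      have := (summable_nat_add_iff 1).mpr h0
      simpa [Nat.cast_add] using this
    have h2 := h1.mul_of_nonneg ih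
      (fun m => Real.rpow_nonneg (by positivity) _)
      (fun v => Finset.prod_nonneg fun i _ => Real.rpow_nonneg (by positivity) _)
    have := (Fin.consEquiv fun _ : Fin (n+1) => ℕ).symm.summable_iff.mpr h2
    refine this.congr fun v => ?_
    simp [Fin.consEquiv, Fin.prod_univ_succ, Fin.tail]

lemma summable_barnes (δ : ℕ) (hδ : 1 ≤ δ) {w : ℝ} (hw : 0 < w) (θ : Fin δ → ℝ)
    (hθ : ∀ i, 0 < θ i) {s : ℂ} (hs : (δ : ℝ) < s.re) :
    Summable (fun v : Fin δ → ℕ => ((w + ∑ i, θ i * (v i : ℝ) : ℝ) : ℂ) ^ (-s)) := by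
  have hδ0 : (0 : ℝ) < δ := by exact_mod_cast hδ
  have hσ : (0 : ℝ) < s.re := lt_trans hδ0 hs
  set σ := s.re with hσdef
  have hne : (univ : Finset (Fin δ)).Nonempty :=
    Finset.univ_nonempty_iff.mpr (Fin.pos_iff_nonempty.mp (by omega))
  set m := min w (univ.inf' hne θ) with hm
  have hm0 : 0 < m := lt_min hw ((Finset.lt_inf'_iff hne).mpr fun i _ => hθ i)
  have hmθ : ∀ i, m ≤ θ i := fun i => le_trans (min_le_right _ _)
    (Finset.inf'_le _ (mem_univ i))
  have hr : 1 < σ / δ := (one_lt_div hδ0).mpr hs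
  apply Summable.of_norm_bounded
    (g := fun v : Fin δ → ℕ => m ^ (-σ) * ∏ i, ((v i : ℝ) + 1) ^ (-σ / δ))
    (((summable_prod_rpow δ hr).mul_left _).congr (fun v => by
      rw [neg_div]))
  intro v
  have hsum0 : (0:ℝ) ≤ ∑ i, θ i * (v i : ℝ) :=
    Finset.sum_nonneg fun i _ => mul_nonneg (hθ i).le (Nat.cast_nonneg _)
  have hpos : 0 < w + ∑ i, θ i * (v i : ℝ) := by linarith
  rw [Complex.norm_cpow_eq_rpow_re_of_pos hpos]
  have hre : (-s).re = -σ := by simp [hσdef]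
  rw [hre]
  -- step 1 : m * (1 + Σ v) ≤ w + θ·v
  have step1 : m * (1 + ∑ i, (v i : ℝ)) ≤ w + ∑ i, θ i * (v i : ℝ) := by
    rw [mul_add, mul_one, Finset.mul_sum]
    refine add_le_add (min_le_left _ _) (Finset.sum_le_sum fun i _ => ?_)
    exact mul_le_mul_of_nonneg_right (hmθ i) (Nat.cast_nonneg _)
  have hS0 : (0:ℝ) < 1 + ∑ i, (v i : ℝ) := by positivity
  have step2 : ∏ i, ((v i : ℝ) + 1) ≤ (1 + ∑ i, (v i : ℝ)) ^ (δ : ℕ) := by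
    calc ∏ i, ((v i : ℝ) + 1) ≤ ∏ _i : Fin δ, (1 + ∑ j, (v j : ℝ)) := by
          refine Finset.prod_le_prod (fun i _ => by positivity) (fun i _ => ?_)
          have : (v i : ℝ) ≤ ∑ j, (v j : ℝ) :=
            Finset.single_le_sum (fun j _ => (Nat.cast_nonneg _ : (0:ℝ) ≤ _)) (mem_univ i)
          linarith
      _ = (1 + ∑ i, (v i : ℝ)) ^ (δ : ℕ) := by
          rw [Finset.prod_const, Finset.card_univ, Fintype.card_fin]
  calc (w + ∑ i, θ i * (v i : ℝ)) ^ (-σ)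
      ≤ (m * (1 + ∑ i, (v i : ℝ))) ^ (-σ) :=
        Real.rpow_le_rpow_of_nonpos (by positivity) step1 (by linarith)
    _ = m ^ (-σ) * (1 + ∑ i, (v i : ℝ)) ^ (-σ) :=
        Real.mul_rpow hm0.le hS0.le
    _ ≤ m ^ (-σ) * ∏ i, ((v i : ℝ) + 1) ^ (-σ / δ) := by
        refine mul_le_mul_of_nonneg_left ?_ (Real.rpow_nonneg hm0.le _)
        have h1 : (1 + ∑ i, (v i : ℝ)) ^ (-σ) =
            ((1 + ∑ i, (v i : ℝ)) ^ (δ : ℕ)) ^ (-σ / δ) := by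
          rw [← Real.rpow_natCast (1 + ∑ i, (v i : ℝ)) δ, ← Real.rpow_mul hS0.le]
          congr 1
          field_simp
        rw [h1, Real.finset_prod_rpow _ _ (fun i _ => by positivity)]
        exact Real.rpow_le_rpow_of_nonpos
          (Finset.prod_pos fun i _ => by positivity) step2
          (by rw [neg_div]; exact neg_nonpos.mpr (by positivity))

lemma symm_eta {d : ℕ} (T : Finset (Fin d)) (k : Fin T.card)
    (h : T.orderEmbOfFin rfl k ∈ T) :
    (T.orderIsoOfFin rfl).symm ⟨T.orderEmbOfFin rfl k, h⟩ = k := by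
  have h2 : (⟨T.orderEmbOfFin rfl k, h⟩ : T) = T.orderIsoOfFin rfl k :=
    Subtype.ext (Finset.coe_orderIsoOfFin_apply T rfl k).symm
  rw [h2, OrderIso.symm_apply_apply]

def posEquiv (d : ℕ) : (Fin d → ℕ) ≃ {v : Fin d → ℕ // ∀ i, 0 < v i} where
  toFun u := ⟨fun i => u i + 1, fun i => Nat.succ_pos _⟩
  invFun v := fun i => v.1 i - 1
  left_inv u := by funext i; simp
  right_inv v := by
    ext i
    exact Nat.succ_pred_eq_of_pos (v.2 i)

def fiberEquiv {d : ℕ} (T : Finset (Fin d)) : (Fin T.card → ℕ) ≃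
    {v : Fin d → ℕ // Finset.univ.filter (fun i => v i ≠ 0) = T} where
  toFun u := ⟨fun i => if h : i ∈ T then u ((T.orderIsoOfFin rfl).symm ⟨i, h⟩) + 1 else 0, by
    ext i
    simp only [Finset.mem_filter, Finset.mem_univ, true_and]
    constructor
    · intro h
      by_contra hi
      simp [hi] at h
    · intro h
      simp [h]⟩
  invFun v := fun k => v.1 ((T.orderIsoOfFin rfl k) : Fin d) - 1
  left_inv u := by
    funext k
    have hmem : ((T.orderIsoOfFin rfl k) : Fin d) ∈ T := (T.orderIsoOfFin rfl k).2
    simp only [hmem, dif_pos, Nat.add_sub_cancel]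
    exact congrArg u (symm_eta T k hmem)
  right_inv v := by
    ext i
    by_cases h : i ∈ T
    · have hne : v.1 i ≠ 0 := by
        have := v.2
        rw [← this] at h
        simpa using (Finset.mem_filter.mp h).2
      simp only [h, dif_pos, OrderIso.apply_symm_apply]
      exact Nat.succ_pred_eq_of_pos (Nat.pos_of_ne_zero hne)
    · have hz : v.1 i = 0 := by
        by_contra hne
        exact h (by rw [← v.2]; simp [hne])
      simp [h, hz]

lemma nnz_fiber {d : ℕ} (T : Finset (Fin d)) (u : Fin T.card → ℕ) :
    nnz ((fiberEquiv T u).1) = T.card := by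
  rw [nnz, (fiberEquiv T u).2]

lemma sumT {d : ℕ} (T : Finset (Fin d)) (g : Fin d → ℝ) :
    ∑ i ∈ T, g i = ∑ k, g ((T.orderIsoOfFin rfl k : Fin d)) := by
  rw [← Finset.sum_coe_sort T g]
  exact (Fintype.sum_equiv (T.orderIsoOfFin rfl).toEquiv _ _ fun k => rfl).symm

lemma fiber_apply {d : ℕ} (T : Finset (Fin d)) (u : Fin T.card → ℕ) (k : Fin T.card) :
    (fiberEquiv T u).1 ((T.orderIsoOfFin rfl k : Fin d)) = u k + 1 := by
  have hmem : ((T.orderIsoOfFin rfl k) : Fin d) ∈ T := (T.orderIsoOfFin rfl k).2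
  simp only [fiberEquiv, Equiv.coe_fn_mk, hmem, dif_pos]
  exact congrArg (· + 1) (congrArg u (symm_eta T k hmem))

lemma dot_fiber {d : ℕ} (θ : Fin d → ℝ) (T : Finset (Fin d)) (u : Fin T.card → ℕ) :
    dotR θ ((fiberEquiv T u).1) =
      (∑ i ∈ T, θ i) + ∑ k, θ ((T.orderIsoOfFin rfl k) : Fin d) * (u k : ℝ) := by
  rw [dotR]
  rw [← Finset.sum_subset (Finset.subset_univ T) (by
    intro i _ hi
    simp [fiberEquiv, hi])]
  rw [sumT T (fun i => θ i * (((fiberEquiv T u).1 i : ℕ) : ℝ))]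
  rw [sumT T θ, ← Finset.sum_add_distrib]
  refine Finset.sum_congr rfl fun k _ => ?_
  rw [fiber_apply]
  push_cast
  ring

lemma dot_pos {d : ℕ} (θ : Fin d → ℝ) (u : Fin d → ℕ) :
    dotR θ ((posEquiv d u).1) = (∑ i, θ i) + ∑ i, θ i * (u i : ℝ) := by
  rw [dotR]
  simp only [posEquiv, Equiv.coe_fn_mk]
  rw [← Finset.sum_add_distrib]
  refine Finset.sum_congr rfl fun i _ => ?_
  push_cast
  ring

lemma nnz_pos {d : ℕ} (u : Fin d → ℕ) : nnz ((posEquiv d u).1) = d := by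
  simp [nnz, posEquiv, Finset.filter_true_of_mem]

/-- The Barnes zeta function in `δ` dimensions,
`ζ_δ(s, w, θ) = Σ_{v ∈ ℤ_{≥0}^δ} (w + θ·v)^{-s}`. -/
def barnesZeta (δ : ℕ) (s w : ℂ) (θ : Fin δ → ℂ) : ℂ :=
  ∑' v : Fin δ → ℕ, (w + ∑ i, θ i * (v i : ℂ)) ^ (-s)

/-- For `θ ∈ (0,∞)^d` and `Re s > d`,
`Σ_{v ∈ ℤ^d_+ \ {0}} 2^{d(v)-1}(θ·v)^{-s}` is a sum of Barnes zeta functions indexed by the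
nonempty subsets `{i_1 < ⋯ < i_j}` of `{1,…,d}`; in particular the subsum over vectors with
all coordinates positive equals `2^{d-1} ζ_d(s, θ_1+⋯+θ_d, θ)`. -/
theorem stmt5 (d : ℕ) (hd : 1 ≤ d) (θ : Fin d → ℝ) (hθ : ∀ i, 0 < θ i)
    (s : ℂ) (hs : (d : ℝ) < s.re) :
    ((∑' v : {v : Fin d → ℕ // v ≠ 0}, (2 : ℂ) ^ (nnz v.1 - 1) * (dotR θ v.1 : ℂ) ^ (-s)) =
      ∑ T ∈ Finset.univ.powerset.filter Finset.Nonempty,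
        (2 : ℂ) ^ (T.card - 1) *
          barnesZeta T.card s (∑ i ∈ T, (θ i : ℂ))
            (fun i => ((θ (T.orderIsoOfFin rfl i).1 : ℝ) : ℂ))) ∧
    (∑' v : {v : Fin d → ℕ // ∀ i, 0 < v i},
        (2 : ℂ) ^ (nnz v.1 - 1) * (dotR θ v.1 : ℂ) ^ (-s)) =
      2 ^ (d - 1) * barnesZeta d s (∑ i, (θ i : ℂ)) (fun i => (θ i : ℂ)) := by
  classical
  set f : (Fin d → ℕ) → ℂ :=
    fun v => (2 : ℂ) ^ (nnz v - 1) * ((dotR θ v : ℝ) : ℂ) ^ (-s) with hf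
  constructor
  · -- part 1
    have hfib : ∀ T ∈ (Finset.univ.powerset.filter Finset.Nonempty :
        Finset (Finset (Fin d))),
        Summable (Set.indicator {v : Fin d → ℕ |
            Finset.univ.filter (fun i => v i ≠ 0) = T} f) ∧
        ∑' v, Set.indicator {v : Fin d → ℕ |
            Finset.univ.filter (fun i => v i ≠ 0) = T} f v =
          (2 : ℂ) ^ (T.card - 1) * barnesZeta T.card s (∑ i ∈ T, (θ i : ℂ))
            (fun i => ((θ (T.orderIsoOfFin rfl i).1 : ℝ) : ℂ)) := by
      intro T hT
      rw [Finset.mem_filter, Finset.mem_powerset] at hT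
      obtain ⟨hTsub, hTne⟩ := hT
      have hcard : 1 ≤ T.card := Finset.card_pos.mpr hTne
      have hw : 0 < ∑ i ∈ T, θ i := Finset.sum_pos (fun i _ => hθ i) hTne
      have hcd : (T.card : ℝ) < s.re := by
        have h1 : T.card ≤ d := by
          simpa using Finset.card_le_card hTsub
        exact lt_of_le_of_lt (by exact_mod_cast h1) hs
      have hsum0 := summable_barnes T.card hcard hw
        (fun k => θ ((T.orderIsoOfFin rfl k : Fin d))) (fun k => hθ _) hcd
      have hcomp : ∀ u : Fin T.card → ℕ,
          f ((fiberEquiv T u).1) =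
            (2 : ℂ) ^ (T.card - 1) *
              (((∑ i ∈ T, θ i) +
                ∑ k, θ ((T.orderIsoOfFin rfl k : Fin d)) * (u k : ℝ) : ℝ) : ℂ) ^ (-s) := by
        intro u
        rw [hf]
        simp only
        rw [nnz_fiber, dot_fiber]
      have hsum1 : Summable (fun u : Fin T.card → ℕ => f ((fiberEquiv T u).1)) :=
        ((hsum0.mul_left ((2 : ℂ) ^ (T.card - 1))).congr fun u => (hcomp u).symm)
      have hsub : Summable ((fun v : {v : Fin d → ℕ //
          Finset.univ.filter (fun i => v i ≠ 0) = T} => f v.1) ∘ (fiberEquiv T)) := hsum1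
      have hsub2 := (fiberEquiv T).summable_iff.mp hsub
      constructor
      · exact summable_subtype_iff_indicator.mp hsub2
      · calc ∑' v, Set.indicator {v : Fin d → ℕ |
              Finset.univ.filter (fun i => v i ≠ 0) = T} f v
            = ∑' x : {v : Fin d → ℕ // Finset.univ.filter (fun i => v i ≠ 0) = T}, f x.1 :=
              (_root_.tsum_subtype _ f).symm
          _ = ∑' u : Fin T.card → ℕ, f ((fiberEquiv T u).1) :=
              (Equiv.tsum_eq (fiberEquiv T)
                (fun v : {v : Fin d → ℕ //
                  Finset.univ.filter (fun i => v i ≠ 0) = T} => f v.1)).symm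
          _ = _ := by
              rw [tsum_congr hcomp, tsum_mul_left]
              congr 1
              rw [barnesZeta]
              refine tsum_congr fun u => ?_
              congr 1
              push_cast
              rfl
    have hpt : ∀ v, Set.indicator {v : Fin d → ℕ | v ≠ 0} f v =
        ∑ T ∈ (Finset.univ.powerset.filter Finset.Nonempty : Finset (Finset (Fin d))),
          Set.indicator {v : Fin d → ℕ |
            Finset.univ.filter (fun i => v i ≠ 0) = T} f v := by
      intro v
      by_cases hv : v = 0
      · subst hv
        rw [Set.indicator_of_notMem (by simp)]
        refine (Finset.sum_eq_zero fun T hT => ?_).symm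
        rw [Finset.mem_filter] at hT
        refine Set.indicator_of_notMem (fun hmem => ?_) _
        have hTe : T = ∅ := by
          rw [← hmem]
          simp
        rw [hTe] at hT
        exact Finset.not_nonempty_empty hT.2
      · rw [Set.indicator_of_mem (by exact hv)]
        have hT₀mem : (Finset.univ.filter (fun i => v i ≠ 0)) ∈
            (Finset.univ.powerset.filter Finset.Nonempty : Finset (Finset (Fin d))) := by
          rw [Finset.mem_filter, Finset.mem_powerset]
          refine ⟨Finset.subset_univ _, ?_⟩
          obtain ⟨i, hi⟩ := Function.ne_iff.mp hv
          exact ⟨i, by simpa using hi⟩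
        rw [Finset.sum_eq_single (Finset.univ.filter (fun i => v i ≠ 0))]
        · exact (Set.indicator_of_mem (show v ∈ {w : Fin d → ℕ |
              Finset.univ.filter (fun i => w i ≠ 0) =
                Finset.univ.filter (fun i => v i ≠ 0)} from rfl) f).symm
        · intro T _ hne
          exact Set.indicator_of_notMem (fun h => hne h.symm) _
        · intro h
          exact absurd hT₀mem h
    calc (∑' v : {v : Fin d → ℕ // v ≠ 0}, f v.1)
        = ∑' v, Set.indicator {v : Fin d → ℕ | v ≠ 0} f v := _root_.tsum_subtype _ f
      _ = ∑' v, ∑ T ∈ (Finset.univ.powerset.filter Finset.Nonempty :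
            Finset (Finset (Fin d))), Set.indicator {v : Fin d → ℕ |
              Finset.univ.filter (fun i => v i ≠ 0) = T} f v := tsum_congr hpt
      _ = ∑ T ∈ (Finset.univ.powerset.filter Finset.Nonempty :
            Finset (Finset (Fin d))), ∑' v, Set.indicator {v : Fin d → ℕ |
              Finset.univ.filter (fun i => v i ≠ 0) = T} f v :=
          Summable.tsum_finsetSum fun T hT => (hfib T hT).1
      _ = _ := Finset.sum_congr rfl fun T hT => (hfib T hT).2
  · -- part 2
    rw [← Equiv.tsum_eq (posEquiv d)
      (fun v : {v : Fin d → ℕ // ∀ i, 0 < v i} =>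
        (2 : ℂ) ^ (nnz v.1 - 1) * ((dotR θ v.1 : ℝ) : ℂ) ^ (-s))]
    have h : ∀ u : Fin d → ℕ,
        (2 : ℂ) ^ (nnz (posEquiv d u).1 - 1) * ((dotR θ (posEquiv d u).1 : ℝ) : ℂ) ^ (-s) =
          (2 : ℂ) ^ (d - 1) *
            ((((∑ i, θ i) + ∑ i, θ i * (u i : ℝ)) : ℝ) : ℂ) ^ (-s) := by
      intro u
      rw [nnz_pos, dot_pos]
    rw [tsum_congr h, tsum_mul_left]
    congr 1
    rw [barnesZeta]
    refine tsum_congr fun u => ?_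
    congr 1
    push_cast
    rfl
end
end

section
/- The polynomials P_d satisfy P_1(X) = 1, P_2(X) = 2X, and the recursion P_{d+2}(X) = (2X/(d+1)) P_{d+1}(X) + P_d(X) for every integer d ≥ 1. -/
open Polynomial Finset

noncomputable section

/-- The polynomial `P_d(X) = Σ_{δ=1}^d binom(d,δ) 2^{δ-1} (∏_{k=1}^{δ-1}(X−k))/(δ−1)!`,
with the empty product equal to `1` for `δ = 1`. -/
def Ppoly (d : ℕ) : Polynomial ℝ :=
  ∑ δ ∈ Finset.Icc 1 d,
    Polynomial.C ((d.choose δ : ℝ) * 2 ^ (δ - 1) / (Nat.factorial (δ - 1) : ℝ)) *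
      ∏ k ∈ Finset.Icc 1 (δ - 1), (Polynomial.X - Polynomial.C (k : ℝ))

/-- Auxiliary: the coefficient in `Ppoly`. -/
def cc (d δ : ℕ) : ℝ := (d.choose δ : ℝ) * 2 ^ (δ - 1) / (Nat.factorial (δ - 1) : ℝ)

/-- Auxiliary: the falling-type product. -/
def Rp (δ : ℕ) : Polynomial ℝ := ∏ k ∈ Finset.Icc 1 (δ - 1), (X - C (k:ℝ))

lemma Ppoly_eq (d : ℕ) : Ppoly d = ∑ δ ∈ Icc 1 d, C (cc d δ) * Rp δ := rfl

lemma X_mul_Rp (δ : ℕ) (hδ : 1 ≤ δ) : X * Rp δ = Rp (δ+1) + C (δ:ℝ) * Rp δ := by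
  obtain ⟨m, rfl⟩ := Nat.exists_eq_add_of_le hδ
  have h : Rp (1+m+1) = Rp (1+m) * (X - C ((1+m : ℕ):ℝ)) := by
    unfold Rp
    rw [show 1+m+1-1 = m+1 by omega, show 1+m-1 = m by omega,
      Finset.prod_Icc_succ_top (Nat.le_add_left 1 m)]
    norm_num [add_comm]
  rw [h]; ring

lemma sum_ext (n e : ℕ) (h : n ≤ e) :
    Ppoly n = ∑ δ ∈ Icc 1 e, C (cc n δ) * Rp δ := by
  rw [Ppoly_eq]
  apply Finset.sum_subset (Finset.Icc_subset_Icc_right h)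
  intro x hx hx'
  have : n < x := by simp only [mem_Icc] at hx hx'; omega
  simp [cc, Nat.choose_eq_zero_of_lt this]

lemma keyN (d j : ℕ) : (d+1)*Nat.choose (d+2) (j+2)
    = (j+1)*Nat.choose (d+1) (j+1) + 2*(j+2)*Nat.choose (d+1) (j+2) + (d+1)*Nat.choose d (j+2) := by
  have h1 := Nat.add_one_mul_choose_eq d (j+1)
  have h2 := Nat.add_one_mul_choose_eq d j
  have p1 : Nat.choose (d+2) (j+2) = Nat.choose (d+1) (j+1) + Nat.choose (d+1) (j+2) :=
    Nat.choose_succ_succ _ _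
  have p2 : Nat.choose (d+1) (j+1) = Nat.choose d j + Nat.choose d (j+1) :=
    Nat.choose_succ_succ _ _
  have p3 : Nat.choose (d+1) (j+2) = Nat.choose d (j+1) + Nat.choose d (j+2) :=
    Nat.choose_succ_succ _ _
  nlinarith [h1, h2, p1, p2, p3]

lemma keyC (d j : ℕ) : ((d:ℝ)+1) * cc (d+2) (j+2)
    = 2 * cc (d+1) (j+1) + 2 * cc (d+1) (j+2) * ((j:ℝ)+2) + ((d:ℝ)+1) * cc d (j+2) := by
  have hc : ((d:ℝ)+1)*((d+2).choose (j+2) :ℝ)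
      = ((j:ℝ)+1)*((d+1).choose (j+1):ℝ) + 2*((j:ℝ)+2)*((d+1).choose (j+2):ℝ)
        + ((d:ℝ)+1)*(d.choose (j+2):ℝ) := by exact_mod_cast congrArg (Nat.cast (R := ℝ)) (keyN d j)
  have hj1 : ((j:ℝ)+1) ≠ 0 := by positivity
  have ha : ((j:ℝ)+1) * ((j:ℝ)+1)⁻¹ = 1 := mul_inv_cancel₀ hj1
  simp only [cc, show j+2-1 = j+1 from rfl, show j+1-1 = j from rfl, Nat.factorial_succ,
    Nat.cast_mul, Nat.cast_add, Nat.cast_one, div_eq_mul_inv, mul_inv]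
  linear_combination ((2:ℝ)^(j+1) * ((j:ℝ)+1)⁻¹ * ((j.factorial:ℝ))⁻¹) * hc
    + (2*((d+1).choose (j+1):ℝ)*2^j*((j.factorial:ℝ))⁻¹) * ha

lemma keyC1 (d : ℕ) : ((d:ℝ)+1) * cc (d+2) 1 = 2 * cc (d+1) 1 * 1 + ((d:ℝ)+1) * cc d 1 := by
  simp [cc]
  ring

lemma main_mul (d : ℕ) :
    C ((d:ℝ)+1) * Ppoly (d+2) = C 2 * X * Ppoly (d+1) + C ((d:ℝ)+1) * Ppoly d := by
  rw [Ppoly_eq (d+2), sum_ext d (d+2) (by omega), Ppoly_eq (d+1)]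
  rw [Finset.mul_sum, Finset.mul_sum, Finset.mul_sum]
  -- middle term
  have hmid : (∑ δ ∈ Icc 1 (d+1), C 2 * X * (C (cc (d+1) δ) * Rp δ))
      = (∑ δ ∈ Icc 1 (d+1), C 2 * C (cc (d+1) δ) * Rp (δ+1))
        + ∑ δ ∈ Icc 1 (d+1), C 2 * C (cc (d+1) δ) * C (δ:ℝ) * Rp δ := by
    rw [← Finset.sum_add_distrib]
    refine Finset.sum_congr rfl fun δ hδ => ?_
    have h1 : 1 ≤ δ := (Finset.mem_Icc.mp hδ).1
    have := X_mul_Rp δ h1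
    calc C 2 * X * (C (cc (d+1) δ) * Rp δ)
        = C 2 * C (cc (d+1) δ) * (X * Rp δ) := by ring
      _ = _ := by rw [this]; ring
  rw [hmid]
  -- reindex first sum
  have hA : (∑ δ ∈ Icc 1 (d+1), C 2 * C (cc (d+1) δ) * Rp (δ+1))
      = ∑ δ ∈ Icc 2 (d+2), C 2 * C (cc (d+1) (δ-1)) * Rp δ := by
    rw [show (Icc 2 (d+2) : Finset ℕ) = (Icc 1 (d+1)).map (addRightEmbedding 1) by
      rw [Finset.map_add_right_Icc]]
    rw [Finset.sum_map]
    rfl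
  rw [hA]
  -- extend second sum to Icc 1 (d+2)
  have hB : (∑ δ ∈ Icc 1 (d+1), C 2 * C (cc (d+1) δ) * C (δ:ℝ) * Rp δ)
      = ∑ δ ∈ Icc 1 (d+2), C 2 * C (cc (d+1) δ) * C (δ:ℝ) * Rp δ := by
    apply Finset.sum_subset (Finset.Icc_subset_Icc_right (by omega))
    intro x hx hx'
    have : d+1 < x := by simp only [mem_Icc] at hx hx'; omega
    simp [cc, Nat.choose_eq_zero_of_lt this]
  rw [hB]
  -- split off δ = 1
  have hsplit : (Icc 1 (d+2) : Finset ℕ) = insert 1 (Icc 2 (d+2)) := by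
    ext x; simp only [mem_Icc, mem_insert]; omega
  have h1n : (1:ℕ) ∉ Icc 2 (d+2) := by simp
  rw [hsplit, Finset.sum_insert h1n, Finset.sum_insert h1n, Finset.sum_insert h1n]
  -- termwise identity on Icc 2 (d+2)
  have hterm : ∀ δ ∈ Icc 2 (d+2),
      C ((d:ℝ)+1) * (C (cc (d+2) δ) * Rp δ)
      = C 2 * C (cc (d+1) (δ-1)) * Rp δ + C 2 * C (cc (d+1) δ) * C (δ:ℝ) * Rp δ
        + C ((d:ℝ)+1) * (C (cc d δ) * Rp δ) := by
    intro δ hδ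
    have h2 : 2 ≤ δ := (Finset.mem_Icc.mp hδ).1
    obtain ⟨j, rfl⟩ := Nat.exists_eq_add_of_le h2
    have hs := keyC d j
    rw [show 2 + j = j + 2 by omega] at *
    have hcast2 : ((j + 2 : ℕ) : ℝ) = (j:ℝ) + 2 := by push_cast; ring
    have := congrArg (fun r : ℝ => C r * Rp (j+2)) hs
    rw [show j+2-1 = j+1 from rfl, hcast2]
    simp only [map_add, map_mul, map_one, map_ofNat] at this ⊢
    linear_combination this
  rw [Finset.sum_congr rfl hterm]
  -- δ = 1 scalar identity
  have h1eq : C ((d:ℝ)+1) * (C (cc (d+2) 1) * Rp 1)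
      = C 2 * C (cc (d+1) 1) * C ((1:ℕ):ℝ) * Rp 1 + C ((d:ℝ)+1) * (C (cc d 1) * Rp 1) := by
    have := congrArg (fun r : ℝ => C r * Rp 1) (keyC1 d)
    push_cast
    simp only [map_add, map_mul, map_one, map_ofNat] at this ⊢
    linear_combination this
  rw [Finset.sum_add_distrib, Finset.sum_add_distrib]
  rw [h1eq]
  ring

/-- `P_1(X) = 1`, `P_2(X) = 2X`, and the recursion
`P_{d+2}(X) = (2X/(d+1)) P_{d+1}(X) + P_d(X)` for every `d ≥ 1`. -/
theorem stmt10 :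
    Ppoly 1 = 1 ∧ Ppoly 2 = Polynomial.C 2 * Polynomial.X ∧
    ∀ d : ℕ, 1 ≤ d →
      Ppoly (d + 2) =
        Polynomial.C (2 / ((d : ℝ) + 1)) * Polynomial.X * Ppoly (d + 1) + Ppoly d := by
  refine ⟨?_, ?_, ?_⟩
  · rw [Ppoly, show Finset.Icc 1 1 = {1} from rfl]
    simp
  · rw [Ppoly, show Finset.Icc 1 2 = {1, 2} from rfl]
    simp [Finset.sum_insert]
    ring
  · intro d _
    have hne : ((d:ℝ)+1) ≠ 0 := by positivity
    have h := main_mul d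
    have h2 := congrArg (fun p => C (((d:ℝ)+1)⁻¹) * p) h
    rw [← mul_assoc, ← C_mul, inv_mul_cancel₀ hne, C_1, one_mul] at h2
    rw [h2, mul_add, ← mul_assoc, ← mul_assoc, ← C_mul, ← mul_assoc, ← C_mul,
      inv_mul_cancel₀ hne, C_1, one_mul]
    congr 2
    field_simp
end
end

section
/- For every integer d ≥ 1, the polynomial P_d has degree d−1 and its leading coefficient equals 2^{d-1}/(d-1)!. Moreover P_d is an even polynomial when d is odd and an odd polynomial when d is even, and when d is odd the constant term of P_d equals 1. -/
open Polynomial Finset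

noncomputable section

/-- Reindexed form of `Ppoly`. -/
lemma Ppoly_eq_s11 (d : ℕ) : Ppoly d = ∑ k ∈ Finset.range d,
    Polynomial.C ((d.choose (k+1) : ℝ) * 2 ^ k / (Nat.factorial k : ℝ)) *
      ∏ j ∈ Finset.Icc 1 k, (Polynomial.X - Polynomial.C (j : ℝ)) := by
  unfold Ppoly
  rw [show Finset.Icc 1 d = Finset.Ico 1 (d+1) by rfl, Finset.sum_Ico_eq_sum_range]
  apply Finset.sum_congr (by congr 1)
  intro k _
  congr 2 <;> simp [Nat.add_comm 1 k]

lemma prod_monic (j : ℕ) : (∏ k ∈ Finset.Icc 1 j, (X - Polynomial.C (k : ℝ))).Monic :=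
  monic_prod_of_monic _ _ (fun k _ => monic_X_sub_C _)

lemma prod_natDegree (j : ℕ) :
    (∏ k ∈ Finset.Icc 1 j, (X - Polynomial.C (k : ℝ))).natDegree = j := by
  rw [natDegree_prod_of_monic _ _ (fun k _ => monic_X_sub_C _)]
  have : ∀ x ∈ Finset.Icc 1 j, (X - Polynomial.C (x:ℝ)).natDegree = 1 :=
    fun x _ => natDegree_X_sub_C _
  rw [Finset.sum_congr rfl this]
  simp [Nat.card_Icc]

lemma Ppoly_natDegree_le (d : ℕ) (hd : 1 ≤ d) : (Ppoly d).natDegree ≤ d - 1 := by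
  rw [Ppoly_eq_s11]
  refine Polynomial.natDegree_sum_le_of_forall_le _ _ (fun k hk => ?_)
  refine (natDegree_mul_le).trans ?_
  simp only [natDegree_C, prod_natDegree, Nat.zero_add]
  have := Finset.mem_range.1 hk
  omega

lemma Ppoly_coeff_top (d : ℕ) (hd : 1 ≤ d) :
    (Ppoly d).coeff (d - 1) = 2 ^ (d - 1) / (Nat.factorial (d - 1) : ℝ) := by
  rw [Ppoly_eq_s11, finset_sum_coeff]
  rw [Finset.sum_eq_single (d - 1)]
  · rw [coeff_C_mul]
    have hm := prod_monic (d - 1)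
    have h1 : (∏ j ∈ Finset.Icc 1 (d-1), (X - Polynomial.C (j : ℝ))).coeff (d-1) = 1 := by
      have := hm.coeff_natDegree
      rwa [prod_natDegree] at this
    rw [h1, mul_one]
    have h2 : d - 1 + 1 = d := by omega
    rw [h2, Nat.choose_self]
    push_cast
    ring
  · intro k hk hne
    rw [coeff_C_mul]
    have hdeg : (∏ j ∈ Finset.Icc 1 k, (X - Polynomial.C (j : ℝ))).natDegree < d - 1 := by
      rw [prod_natDegree]
      have := Finset.mem_range.1 hk
      omega
    rw [Polynomial.coeff_eq_zero_of_natDegree_lt hdeg, mul_zero]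
  · intro h
    exact absurd (Finset.mem_range.2 (by omega)) h

lemma Ppoly_natDegree (d : ℕ) (hd : 1 ≤ d) : (Ppoly d).natDegree = d - 1 := by
  refine Polynomial.natDegree_eq_of_le_of_coeff_ne_zero (Ppoly_natDegree_le d hd) ?_
  rw [Ppoly_coeff_top d hd]
  positivity

lemma Ppoly_coeff_zero (d : ℕ) (hd : 1 ≤ d) :
    (Ppoly d).coeff 0 = (1 - (-1 : ℝ) ^ d) / 2 := by
  have heval : (Ppoly d).coeff 0 = (Ppoly d).eval 0 := by
    simp [Polynomial.coeff_zero_eq_eval_zero]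
  rw [heval, Ppoly_eq_s11]
  simp only [eval_finset_sum, eval_mul, eval_C, eval_prod, eval_sub, eval_X, eval_natCast]
  have hterm : ∀ k ∈ Finset.range d,
      ((d.choose (k+1) : ℝ) * 2 ^ k / (Nat.factorial k : ℝ)) *
        ∏ j ∈ Finset.Icc 1 k, ((0:ℝ) - (j:ℝ)) = (d.choose (k+1) : ℝ) * (-2) ^ k := by
    intro k _
    have hpr : ∏ j ∈ Finset.Icc 1 k, ((0:ℝ) - (j:ℝ)) = (-1) ^ k * (Nat.factorial k : ℝ) := by
      have hc : ∀ j ∈ Finset.Icc 1 k, (0:ℝ) - (j:ℝ) = (-1) * (j:ℝ) := by intro j _; ring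
      rw [Finset.prod_congr rfl hc, Finset.prod_mul_distrib, Finset.prod_const]
      congr 1
      · simp [Nat.card_Icc]
      · rw [← Nat.cast_prod]
        congr 1
        rw [show Finset.Icc 1 k = Finset.Ico 1 (k+1) by rfl]
        exact Finset.prod_Ico_id_eq_factorial k
    rw [hpr, show ((-2:ℝ))^k = (-1)^k * 2^k by rw [← neg_one_mul, mul_pow]]
    have hf : (Nat.factorial k : ℝ) ≠ 0 := Nat.cast_ne_zero.2 (Nat.factorial_ne_zero k)
    field_simp
  rw [Finset.sum_congr rfl hterm]
  have hbin : ((-2 : ℝ) + 1) ^ d = ∑ k ∈ Finset.range (d+1), (-2:ℝ)^k * 1^(d-k) * (d.choose k) :=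
    add_pow (-2 : ℝ) 1 d
  have hsum : ∑ k ∈ Finset.range (d+1), (-2:ℝ)^k * 1^(d-k) * (d.choose k)
      = 1 + ∑ k ∈ Finset.range d, (-2:ℝ)^(k+1) * 1^(d-(k+1)) * (d.choose (k+1)) := by
    rw [Finset.sum_range_succ']
    simp [add_comm]
  have h2 : (-2:ℝ) * ∑ k ∈ Finset.range d, (d.choose (k+1) : ℝ) * (-2)^k
      = (-1:ℝ)^d - 1 := by
    rw [Finset.mul_sum]
    have hc : ∀ k ∈ Finset.range d, (-2:ℝ) * ((d.choose (k+1) : ℝ) * (-2)^k)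
        = (-2:ℝ)^(k+1) * 1^(d-(k+1)) * (d.choose (k+1)) := by
      intro k _; rw [one_pow]; ring
    rw [Finset.sum_congr rfl hc]
    have hb := hbin.symm.trans (by norm_num : ((-2:ℝ)+1)^d = (-1:ℝ)^d)
    rw [hsum] at hb
    linarith [hb]
  linarith [h2]

lemma prod_eval_pos (m : ℕ) : ∀ j, j ≤ m →
    ∏ k ∈ Finset.Icc 1 j, ((m:ℝ) + 1 - k) = (m.choose j : ℝ) * (Nat.factorial j : ℝ)
  | 0, _ => by simp
  | (j+1), h => by
    rw [Finset.prod_Icc_succ_top (by omega : 1 ≤ j+1), prod_eval_pos m j (by omega)]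
    have hcR : (m.choose (j+1) : ℝ) * ((j:ℝ)+1) = (m.choose j : ℝ) * ((m:ℝ) - j) := by
      have hc := Nat.choose_succ_right_eq m j
      have := congrArg (fun n : ℕ => (n:ℝ)) hc
      push_cast [Nat.cast_sub (show j ≤ m by omega)] at this
      convert this using 1
    have h1 : ((m:ℝ) + 1 - ((j+1 : ℕ):ℝ)) = (m:ℝ) - j := by push_cast; ring
    rw [h1, Nat.factorial_succ]
    push_cast
    linear_combination (-(Nat.factorial j : ℝ)) * hcR

lemma prod_eval_neg (m : ℕ) : ∀ j : ℕ,
    ∏ k ∈ Finset.Icc 1 j, ((m:ℝ) + 1 + (k:ℝ)) = ((m+1+j).choose j : ℝ) * (Nat.factorial j : ℝ)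
  | 0 => by simp
  | (j+1) => by
    rw [Finset.prod_Icc_succ_top (by omega : 1 ≤ j+1), prod_eval_neg m j]
    have hc := Nat.add_one_mul_choose_eq (m+1+j) j
    have hcR : ((m:ℝ)+1+(j:ℝ)+1) * ((m+1+j).choose j : ℝ)
        = ((m+1+(j+1)).choose (j+1) : ℝ) * ((j:ℝ)+1) := by
      exact_mod_cast congrArg (fun n : ℕ => (n:ℝ)) hc
    rw [Nat.factorial_succ]
    push_cast
    linear_combination (Nat.factorial j : ℝ) * hcR

lemma triangle_swap (n : ℕ) (F : ℕ → ℕ → ℝ) :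
    ∑ k ∈ Finset.range n, ∑ i ∈ Finset.range (k+1), F k i
      = ∑ i ∈ Finset.range n, ∑ k ∈ Finset.Ico i n, F k i := by
  have h1 : ∀ k ∈ Finset.range n, ∑ i ∈ Finset.range (k+1), F k i
      = ∑ i ∈ Finset.range n, if i ≤ k then F k i else 0 := by
    intro k hk
    rw [← Finset.sum_filter]
    apply Finset.sum_congr _ (fun _ _ => rfl)
    ext i
    simp only [Finset.mem_range, Finset.mem_filter]
    have := Finset.mem_range.1 hk
    omega
  rw [Finset.sum_congr rfl h1, Finset.sum_comm]
  apply Finset.sum_congr rfl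
  intro i hi
  rw [← Finset.sum_filter]
  apply Finset.sum_congr _ (fun _ _ => rfl)
  ext k
  simp only [Finset.mem_range, Finset.mem_filter, Finset.mem_Ico]
  omega

lemma star_id (d m : ℕ) (hd : 1 ≤ d) :
    ∑ k ∈ Finset.range d, (d.choose (k+1) : ℝ) * (-2)^k * (((m+1+k).choose k : ℕ) : ℝ)
      = (-1:ℝ)^(d-1) * ∑ k ∈ Finset.range d, (d.choose (k+1) : ℝ) * 2^k * (m.choose k : ℝ) := by
  have hvdm : ∀ k : ℕ, (((m+1+k).choose k : ℕ) : ℝ)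
      = ∑ i ∈ Finset.range (k+1), (m.choose i : ℝ) * ((k+1).choose (k-i) : ℝ) := by
    intro k
    have h := Nat.add_choose_eq m (k+1) k
    rw [Finset.Nat.sum_antidiagonal_eq_sum_range_succ_mk] at h
    have h2 : m + 1 + k = m + (k+1) := by omega
    rw [h2, h]
    push_cast
    rfl
  have hstep1 : ∀ k ∈ Finset.range d,
      (d.choose (k+1) : ℝ) * (-2)^k * (((m+1+k).choose k : ℕ) : ℝ)
        = ∑ i ∈ Finset.range (k+1),
            (d.choose (k+1) : ℝ) * (-2)^k * ((m.choose i : ℝ) * ((k+1).choose (k-i) : ℝ)) := by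
    intro k _
    rw [hvdm k, Finset.mul_sum]
  rw [Finset.sum_congr rfl hstep1,
    triangle_swap d (fun k i => (d.choose (k+1) : ℝ) * (-2)^k * ((m.choose i : ℝ) * ((k+1).choose (k-i) : ℝ)))]
  have hinner : ∀ i ∈ Finset.range d,
      ∑ k ∈ Finset.Ico i d,
          (d.choose (k+1) : ℝ) * (-2)^k * ((m.choose i : ℝ) * ((k+1).choose (k-i) : ℝ))
        = (-1:ℝ)^(d-1) * ((d.choose (i+1) : ℝ) * 2^i * (m.choose i : ℝ)) := by
    intro i hi
    have hid : i < d := Finset.mem_range.1 hi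
    have hc1 : ∀ k ∈ Finset.Ico i d,
        (d.choose (k+1) : ℝ) * (-2)^k * ((m.choose i : ℝ) * ((k+1).choose (k-i) : ℝ))
          = (d.choose (i+1) : ℝ) * ((d-(i+1)).choose (k-i) : ℝ) * (m.choose i : ℝ) * (-2)^k := by
      intro k hk
      have hik : i ≤ k := (Finset.mem_Ico.1 hk).1
      have hkd : k < d := (Finset.mem_Ico.1 hk).2
      have hsymm : (k+1).choose (k-i) = (k+1).choose (i+1) := by
        rw [← Nat.choose_symm (show i+1 ≤ k+1 by omega)]
        congr 1
        omega
      have hmul : d.choose (k+1) * (k+1).choose (i+1)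
          = d.choose (i+1) * (d-(i+1)).choose (k-i) := by
        have h3 : (k+1) - (i+1) = k - i := by omega
        have := Nat.choose_mul (n := d) (show i+1 ≤ k+1 by omega)
        rw [this, h3]
      rw [hsymm]
      have hmulR := congrArg (fun n : ℕ => (n:ℝ)) hmul
      push_cast at hmulR
      linear_combination ((m.choose i : ℝ) * (-2)^k) * hmulR
    rw [Finset.sum_congr rfl hc1, Finset.sum_Ico_eq_sum_range]
    have hc2 : ∀ t ∈ Finset.range (d - i),
        (d.choose (i+1) : ℝ) * ((d-(i+1)).choose ((i+t)-i) : ℝ) * (m.choose i : ℝ) * (-2)^(i+t)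
          = ((d.choose (i+1) : ℝ) * (m.choose i : ℝ) * (-2)^i) * (((d-i-1).choose t : ℝ) * (-2)^t) := by
      intro t _
      have h1 : (i+t) - i = t := by omega
      have h2 : d - (i+1) = d - i - 1 := by omega
      rw [h1, h2, pow_add]
      ring
    rw [Finset.sum_congr rfl hc2, ← Finset.mul_sum]
    have hbin : ∑ t ∈ Finset.range (d - i), ((d-i-1).choose t : ℝ) * (-2)^t
        = (-1:ℝ)^(d-i-1) := by
      obtain ⟨n, hn⟩ : ∃ n, d - i = n + 1 := ⟨d - i - 1, by omega⟩
      have hn2 : d - i - 1 = n := by omega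
      rw [hn2, hn]
      have hb := add_pow (-2 : ℝ) 1 n
      simp only [one_pow, mul_one] at hb
      have hl : ((-2:ℝ)+1)^n = (-1:ℝ)^n := by norm_num
      rw [← hl, hb]
      apply Finset.sum_congr rfl
      intro t _
      ring
    rw [hbin]
    have hpow : (-2:ℝ)^i * (-1:ℝ)^(d-i-1) = (-1:ℝ)^(d-1) * 2^i := by
      rw [show ((-2:ℝ))^i = (-1)^i * 2^i by rw [← neg_one_mul, mul_pow]]
      have : (-1:ℝ)^i * (-1:ℝ)^(d-i-1) = (-1:ℝ)^(d-1) := by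
        rw [← pow_add]
        congr 1
        omega
      linear_combination (2^i : ℝ) * this
    linear_combination ((d.choose (i+1) : ℝ) * (m.choose i : ℝ)) * hpow
  rw [Finset.sum_congr rfl hinner, ← Finset.mul_sum]

lemma Ppoly_eval_neg (d m : ℕ) (hd : 1 ≤ d) (hm : d ≤ m + 1) :
    (Ppoly d).eval (-((m:ℝ)+1)) = (-1:ℝ)^(d-1) * (Ppoly d).eval ((m:ℝ)+1) := by
  rw [Ppoly_eq_s11]
  simp only [eval_finset_sum, eval_mul, eval_C, eval_prod, eval_sub, eval_X, eval_natCast]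
  have hposterm : ∀ k ∈ Finset.range d,
      ((d.choose (k+1) : ℝ) * 2 ^ k / (Nat.factorial k : ℝ)) *
        ∏ j ∈ Finset.Icc 1 k, (((m:ℝ)+1) - (j:ℝ))
      = (d.choose (k+1) : ℝ) * 2^k * (m.choose k : ℝ) := by
    intro k hk
    have hkm : k ≤ m := by have := Finset.mem_range.1 hk; omega
    rw [prod_eval_pos m k hkm]
    have hf : (Nat.factorial k : ℝ) ≠ 0 := Nat.cast_ne_zero.2 (Nat.factorial_ne_zero k)
    field_simp
  have hnegterm : ∀ k ∈ Finset.range d,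
      ((d.choose (k+1) : ℝ) * 2 ^ k / (Nat.factorial k : ℝ)) *
        ∏ j ∈ Finset.Icc 1 k, ((-((m:ℝ)+1)) - (j:ℝ))
      = (d.choose (k+1) : ℝ) * (-2)^k * (((m+1+k).choose k : ℕ) : ℝ) := by
    intro k hk
    have hneg : ∏ j ∈ Finset.Icc 1 k, ((-((m:ℝ)+1)) - (j:ℝ))
        = (-1:ℝ)^k * ∏ j ∈ Finset.Icc 1 k, ((m:ℝ) + 1 + (j:ℝ)) := by
      have hc : ∀ j ∈ Finset.Icc 1 k, (-((m:ℝ)+1)) - (j:ℝ) = (-1) * ((m:ℝ) + 1 + (j:ℝ)) := by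
        intro j _; ring
      rw [Finset.prod_congr rfl hc, Finset.prod_mul_distrib, Finset.prod_const]
      congr 1
      simp [Nat.card_Icc]
    rw [hneg, prod_eval_neg m k]
    have hf : (Nat.factorial k : ℝ) ≠ 0 := Nat.cast_ne_zero.2 (Nat.factorial_ne_zero k)
    rw [show ((-2:ℝ))^k = (-1)^k * 2^k by rw [← neg_one_mul, mul_pow]]
    field_simp
  rw [Finset.sum_congr rfl hposterm, Finset.sum_congr rfl hnegterm]
  exact star_id d m hd

lemma Ppoly_comp_neg (d : ℕ) (hd : 1 ≤ d) :
    (Ppoly d).comp (-X) = (-1:ℝ[X])^(d-1) * Ppoly d := by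
  apply Polynomial.eq_of_infinite_eval_eq
  apply Set.infinite_of_injective_forall_mem
    (f := fun n : ℕ => ((n + d : ℕ) : ℝ))
  · intro a b hab
    have : (a + d : ℕ) = (b + d : ℕ) := Nat.cast_injective hab
    omega
  · intro n
    simp only [Set.mem_setOf_eq, eval_comp, eval_neg, eval_X, eval_mul, eval_pow, eval_one]
    have hm : ((n + d : ℕ) : ℝ) = ((n + d - 1 : ℕ) : ℝ) + 1 := by
      push_cast [Nat.cast_sub (show 1 ≤ n + d by omega)]
      ring
    rw [hm, Ppoly_eval_neg d (n + d - 1) hd (by omega)]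

theorem Ppoly_parts (d : ℕ) (hd : 1 ≤ d) :
    (Ppoly d).natDegree = d - 1 ∧
    (Ppoly d).leadingCoeff = 2 ^ (d - 1) / (Nat.factorial (d - 1) : ℝ) ∧
    (Odd d → (Ppoly d).comp (-Polynomial.X) = Ppoly d) ∧
    (Even d → (Ppoly d).comp (-Polynomial.X) = -Ppoly d) ∧
    (Odd d → (Ppoly d).coeff 0 = 1) := by
  refine ⟨Ppoly_natDegree d hd, ?_, ?_, ?_, ?_⟩
  · rw [Polynomial.leadingCoeff, Ppoly_natDegree d hd, Ppoly_coeff_top d hd]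
  · intro hodd
    rw [Ppoly_comp_neg d hd]
    have he : Even (d-1) := Nat.Odd.sub_odd hodd odd_one
    rw [he.neg_one_pow, one_mul]
  · intro heven
    rw [Ppoly_comp_neg d hd]
    have ho : Odd (d-1) := Nat.Even.sub_odd hd heven odd_one
    rw [ho.neg_one_pow, neg_one_mul]
  · intro hodd
    rw [Ppoly_coeff_zero d hd, hodd.neg_one_pow]
    norm_num

/-- For `d ≥ 1`, `P_d` has degree `d−1` with leading coefficient `2^{d-1}/(d-1)!`;
it is an even polynomial when `d` is odd and an odd polynomial when `d` is even,
and when `d` is odd its constant term is `1`. -/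
theorem stmt11 (d : ℕ) (hd : 1 ≤ d) :
    (Ppoly d).natDegree = d - 1 ∧
    (Ppoly d).leadingCoeff = 2 ^ (d - 1) / (Nat.factorial (d - 1) : ℝ) ∧
    (Odd d → (Ppoly d).comp (-Polynomial.X) = Ppoly d) ∧
    (Even d → (Ppoly d).comp (-Polynomial.X) = -Ppoly d) ∧
    (Odd d → (Ppoly d).coeff 0 = 1) := Ppoly_parts d hd

end
end
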